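/- Fix a positive integer k. For 1 ≤ t ≤ k define the polynomial P_t = ∑_{1≤i₁<i₂<⋯<i_t≤k} (x_{i₁}+x_{i₂}+⋯+x_{i_t})^k in ℚ[x₁, x₂, …, x_k]. Then ∑_{i=0}^{k−1} (−1)^i P_{k−i} = k! · x₁x₂⋯x_k. -/

import Mathlib

set_option maxHeartbeats 1000000

noncomputable section

open MvPolynomial

/-- **Lemma A.3**: the symmetric polynomial identity
`∑_{i=0}^{k−1} (−1)ⁱ P_{k−i} = k! · x₁⋯x_k`, where
`P_t = ∑_{1 ≤ i₁ < ⋯ < i_t ≤ k} (x_{i₁} + ⋯ + x_{i_t})^k`. -/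
theorem alternating_power_sum_identity (k : ℕ) (hk : 0 < k) :
    (∑ i ∈ Finset.range k, (-1 : MvPolynomial (Fin k) ℚ) ^ i *
        ∑ s ∈ Finset.powersetCard (k - i) (Finset.univ : Finset (Fin k)),
          (∑ j ∈ s, (X j : MvPolynomial (Fin k) ℚ)) ^ k) =
      (k.factorial : MvPolynomial (Fin k) ℚ) * ∏ j, (X j : MvPolynomial (Fin k) ℚ) := by
  classical
  -- abbreviation for the inner sums
  set R := MvPolynomial (Fin k) ℚ with hR
  -- Step 1 : rewrite the LHS as a single sum over all subsets.
  have h1 : (∑ i ∈ Finset.range k, (-1 : R) ^ i *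
        ∑ s ∈ Finset.powersetCard (k - i) (Finset.univ : Finset (Fin k)),
          (∑ j ∈ s, (X j : R)) ^ k)
      = ∑ s ∈ (Finset.univ : Finset (Fin k)).powerset,
          (-1 : R) ^ (k - s.card) * (∑ j ∈ s, (X j : R)) ^ k := by
    rw [Finset.powerset_card_disjiUnion]
    erw [Finset.sum_disjiUnion]
    rw [Finset.card_univ,
      Fintype.card_fin]
    have hS : ∀ j : ℕ, (∑ s ∈ Finset.powersetCard j (Finset.univ : Finset (Fin k)),
        (-1 : R) ^ (k - s.card) * (∑ m ∈ s, (X m : R)) ^ k)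
        = (-1 : R) ^ (k - j) * ∑ s ∈ Finset.powersetCard j (Finset.univ : Finset (Fin k)),
            (∑ m ∈ s, (X m : R)) ^ k := by
      intro j
      rw [Finset.mul_sum]
      refine Finset.sum_congr rfl fun s hs => ?_
      rw [(Finset.mem_powersetCard.mp hs).2]
    rw [Finset.sum_congr rfl fun j _ => hS j, Finset.sum_range_succ']
    have h0 : (-1 : R) ^ (k - 0) *
        ∑ s ∈ Finset.powersetCard 0 (Finset.univ : Finset (Fin k)),
          (∑ m ∈ s, (X m : R)) ^ k = 0 := by
      simp [Finset.powersetCard_zero, zero_pow hk.ne']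
    rw [h0, add_zero, ← Finset.sum_range_reflect]
    refine Finset.sum_congr rfl fun i hi => ?_
    have hi' : i < k := Finset.mem_range.mp hi
    have e1 : k - (k - 1 - i) = i + 1 := by omega
    have e2 : k - (i + 1) = k - 1 - i := by omega
    rw [e1, e2]
  rw [h1]
  -- Step 2 : expand each power as a sum over functions.
  have h2 : ∀ s : Finset (Fin k), (∑ j ∈ s, (X j : R)) ^ k
      = ∑ p ∈ Fintype.piFinset (fun _ : Fin k => s), ∏ i, (X (p i) : R) := by
    intro s
    rw [← Finset.prod_univ_sum]
    simp
  have h3 : (∑ s ∈ (Finset.univ : Finset (Fin k)).powerset,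
        (-1 : R) ^ (k - s.card) * (∑ j ∈ s, (X j : R)) ^ k)
      = ∑ s ∈ (Finset.univ : Finset (Fin k)).powerset,
          ∑ p ∈ Fintype.piFinset (fun _ : Fin k => s),
            (-1 : R) ^ (k - s.card) * ∏ i, (X (p i) : R) := by
    refine Finset.sum_congr rfl fun s _ => ?_
    rw [h2, Finset.mul_sum]
  rw [h3]
  -- Step 3 : swap the two sums.
  rw [Finset.sum_comm' (t' := (Finset.univ : Finset (Fin k → Fin k)))
    (s' := fun p => (Finset.univ : Finset (Fin k)).powerset.filter fun s => ∀ i, p i ∈ s)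
    (by
      intro s p
      simp [Fintype.mem_piFinset])]
  -- the sign sum over a powerset
  have hsign : ∀ B : Finset (Fin k),
      (∑ t ∈ B.powerset, (-1 : R) ^ t.card) = if B = ∅ then 1 else 0 := by
    intro B
    have hZ := Finset.sum_powerset_neg_one_pow_card (x := B)
    calc (∑ t ∈ B.powerset, (-1 : R) ^ t.card)
        = ((∑ t ∈ B.powerset, (-1 : ℤ) ^ t.card : ℤ) : R) := by push_cast; rfl
      _ = _ := by rw [hZ]; split <;> simp
  -- Step 4 : compute the inner sum for each function p.
  have h4 : ∀ p : Fin k → Fin k,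
      (∑ s ∈ (Finset.univ : Finset (Fin k)).powerset.filter fun s => ∀ i, p i ∈ s,
        (-1 : R) ^ (k - s.card) * ∏ i, (X (p i) : R))
      = (if Function.Surjective p then 1 else 0) * ∏ i, (X (p i) : R) := by
    intro p
    rw [← Finset.sum_mul]
    congr 1
    -- reindex by complements
    have hbij : (∑ s ∈ (Finset.univ : Finset (Fin k)).powerset.filter fun s => ∀ i, p i ∈ s,
        (-1 : R) ^ (k - s.card))
        = ∑ t ∈ ((Finset.univ : Finset (Fin k)).image p)ᶜ.powerset, (-1 : R) ^ t.card := by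
      refine Finset.sum_bij' (fun s _ => sᶜ) (fun t _ => tᶜ) ?_ ?_ ?_ ?_ ?_
      · intro s hs
        simp only [Finset.mem_filter, Finset.mem_powerset] at hs
        simp only [Finset.mem_powerset]
        exact Finset.compl_subset_compl.mpr
          (Finset.image_subset_iff.mpr fun i _ => hs.2 i)
      · intro t ht
        simp only [Finset.mem_powerset] at ht
        simp only [Finset.mem_filter, Finset.mem_powerset]
        refine ⟨Finset.subset_univ _, fun i => ?_⟩
        have : ((Finset.univ : Finset (Fin k)).image p) ⊆ tᶜ := by
          rw [← compl_compl ((Finset.univ : Finset (Fin k)).image p)]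
          exact Finset.compl_subset_compl.mpr ht
        exact this (Finset.mem_image.mpr ⟨i, Finset.mem_univ i, rfl⟩)
      · intro s _; exact compl_compl s
      · intro t _; exact compl_compl t
      · intro s _
        congr 1
        rw [Finset.card_compl, Fintype.card_fin]
    rw [hbij, hsign]
    have himg : (((Finset.univ : Finset (Fin k)).image p)ᶜ = ∅) ↔ Function.Surjective p := by
      rw [Finset.compl_eq_empty_iff, Finset.eq_univ_iff_forall]
      constructor
      · intro h y
        rcases Finset.mem_image.mp (h y) with ⟨i, _, hi⟩
        exact ⟨i, hi⟩
      · intro h y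
        rcases h y with ⟨i, hi⟩
        exact Finset.mem_image.mpr ⟨i, Finset.mem_univ i, hi⟩
    simp only [himg]
  rw [Finset.sum_congr rfl fun p _ => h4 p]
  -- Step 5 : keep only surjective (= bijective) functions, reindex by permutations.
  rw [← Finset.sum_filter_of_ne (f := fun p : Fin k → Fin k =>
      (if Function.Surjective p then (1:R) else 0) * ∏ i, (X (p i) : R))
      (p := fun p => Function.Surjective p)
      (by intro p _ h; by_contra hs; simp [hs] at h)]
  have h5 : (∑ p ∈ (Finset.univ : Finset (Fin k → Fin k)).filter
        fun p => Function.Surjective p,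
        (if Function.Surjective p then (1:R) else 0) * ∏ i, (X (p i) : R))
      = ∑ σ : Equiv.Perm (Fin k), ∏ i, (X (σ i) : R) := by
    have hbj : ∀ p ∈ (Finset.univ : Finset (Fin k → Fin k)).filter
        fun p => Function.Surjective p, Function.Bijective p := fun p hp =>
      Finite.surjective_iff_bijective.mp (Finset.mem_filter.mp hp).2
    refine Finset.sum_bij' (fun p hp => Equiv.ofBijective p (hbj p hp))
      (fun σ _ => ⇑σ) ?_ ?_ ?_ ?_ ?_
    · intro p _; exact Finset.mem_univ _
    · intro σ _
      simp only [Finset.mem_filter, Finset.mem_univ, true_and]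
      exact σ.surjective
    · intro p hp; rfl
    · intro σ _
      ext x
      rfl
    · intro p hp
      have hsurj := (Finset.mem_filter.mp hp).2
      simp [hsurj]
  rw [h5]
  have h6 : ∀ σ : Equiv.Perm (Fin k), (∏ i, (X (σ i) : R)) = ∏ j, (X j : R) := by
    intro σ
    exact Equiv.prod_comp σ (fun j => (X j : R))
  rw [Finset.sum_congr rfl fun σ _ => h6 σ, Finset.sum_const, Finset.card_univ,
    Fintype.card_perm, Fintype.card_fin, nsmul_eq_mul]
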